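/- (Derivative of the vaccination switching function.) Fix real numbers u_P, u_V, and let z : ℝ → ℝ³ and λ : ℝ → ℝ³ be functions such that at some time t₀, z has derivative f(z(t₀)) + u_P · g_P(z(t₀)) + u_V · g_V(z(t₀)) and λ has derivative −(Df(z(t₀)) + u_P · Dg_P(z(t₀)) + u_V · Dg_V(z(t₀)))ᵀ λ(t₀), where ᵀ denotes the adjoint (transpose) with respect to the standard inner product ⟨·,·⟩ on ℝ³. Then the function t ↦ ⟨λ(t), g_V(z(t))⟩ is differentiable at t₀ with derivative equal to u_P · ⟨λ(t₀), [g_P, g_V](z(t₀))⟩. -/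

import Mathlib

noncomputable section

/-- Drift vector field of the Mayer-form SIRI dynamics, `z = (x_C, x_S, x_R)`. -/
def fVec (cP cI γ : ℝ) (z : ℝ × ℝ × ℝ) : ℝ × ℝ × ℝ :=
  (cP * (z.2.1 + z.2.2) + cI * (1 - z.2.1 - z.2.2), 0, γ * (1 - z.2.1 - z.2.2))

/-- Control vector field for the protection input. -/
def gPVec (β βh cP : ℝ) (z : ℝ × ℝ × ℝ) : ℝ × ℝ × ℝ :=
  (-(cP * (z.2.1 + z.2.2)), -(β * z.2.1 * (1 - z.2.1 - z.2.2)),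
    -(βh * z.2.2 * (1 - z.2.1 - z.2.2)))

/-- Control vector field for the vaccination input. -/
def gVVec (cV : ℝ) (z : ℝ × ℝ × ℝ) : ℝ × ℝ × ℝ := (cV * z.2.1, -z.2.1, z.2.1)

/-- Lie bracket of two vector fields on `ℝ³`:
`[X, Y](z) = DY(z) X(z) − DX(z) Y(z)`, where `D` is the Fréchet derivative. -/
def lieBr (X Y : ℝ × ℝ × ℝ → ℝ × ℝ × ℝ) (z : ℝ × ℝ × ℝ) : ℝ × ℝ × ℝ :=
  fderiv ℝ Y z (X z) - fderiv ℝ X z (Y z)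

/-- Standard inner product on `ℝ³ = ℝ × ℝ × ℝ`. -/
def dot3 (a b : ℝ × ℝ × ℝ) : ℝ := a.1 * b.1 + a.2.1 * b.2.1 + a.2.2 * b.2.2

lemma fd_gV (cV : ℝ) (Z v : ℝ×ℝ×ℝ) : fderiv ℝ (gVVec cV) Z v = (cV * v.2.1, -v.2.1, v.2.1) := by
  have hS : HasFDerivAt (fun p : ℝ×ℝ×ℝ => p.2.1)
      ((ContinuousLinearMap.fst ℝ ℝ ℝ).comp (ContinuousLinearMap.snd ℝ ℝ (ℝ×ℝ))) Z :=
    (hasFDerivAt_snd).fst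
  have h : HasFDerivAt (gVVec cV) _ Z := (HasFDerivAt.prodMk (hS.const_mul cV) (HasFDerivAt.prodMk hS.neg hS))
  rw [h.fderiv]; simp

lemma fd_f (cP cI γ : ℝ) (Z v : ℝ×ℝ×ℝ) : fderiv ℝ (fVec cP cI γ) Z v =
    (cP * (v.2.1 + v.2.2) - cI * (v.2.1 + v.2.2), 0, -(γ * (v.2.1 + v.2.2))) := by
  have hS : HasFDerivAt (fun p : ℝ×ℝ×ℝ => p.2.1)
      ((ContinuousLinearMap.fst ℝ ℝ ℝ).comp (ContinuousLinearMap.snd ℝ ℝ (ℝ×ℝ))) Z :=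
    (hasFDerivAt_snd).fst
  have hR : HasFDerivAt (fun p : ℝ×ℝ×ℝ => p.2.2)
      ((ContinuousLinearMap.snd ℝ ℝ ℝ).comp (ContinuousLinearMap.snd ℝ ℝ (ℝ×ℝ))) Z :=
    (hasFDerivAt_snd).snd
  have hone := ((hasFDerivAt_const (1:ℝ) Z).sub hS).sub hR
  have h : HasFDerivAt (fVec cP cI γ) _ Z :=
    HasFDerivAt.prodMk (((hS.add hR).const_mul cP).add (hone.const_mul cI))
      (HasFDerivAt.prodMk (hasFDerivAt_const (0:ℝ) Z) (hone.const_mul γ))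
  rw [h.fderiv]; refine Prod.ext ?_ (Prod.ext ?_ ?_) <;> (simp; try ring)

lemma fd_gP (β βh cP : ℝ) (Z v : ℝ×ℝ×ℝ) : fderiv ℝ (gPVec β βh cP) Z v =
    (-(cP * (v.2.1 + v.2.2)),
     β * Z.2.1 * (v.2.1 + v.2.2) - β * v.2.1 * (1 - Z.2.1 - Z.2.2),
     βh * Z.2.2 * (v.2.1 + v.2.2) - βh * v.2.2 * (1 - Z.2.1 - Z.2.2)) := by
  have hS : HasFDerivAt (fun p : ℝ×ℝ×ℝ => p.2.1)
      ((ContinuousLinearMap.fst ℝ ℝ ℝ).comp (ContinuousLinearMap.snd ℝ ℝ (ℝ×ℝ))) Z :=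
    (hasFDerivAt_snd).fst
  have hR : HasFDerivAt (fun p : ℝ×ℝ×ℝ => p.2.2)
      ((ContinuousLinearMap.snd ℝ ℝ ℝ).comp (ContinuousLinearMap.snd ℝ ℝ (ℝ×ℝ))) Z :=
    (hasFDerivAt_snd).snd
  have hone := ((hasFDerivAt_const (1:ℝ) Z).sub hS).sub hR
  have h : HasFDerivAt (gPVec β βh cP) _ Z :=
    HasFDerivAt.prodMk (((hS.add hR).const_mul cP).neg)
      (HasFDerivAt.prodMk (((hS.const_mul β).mul hone).neg) (((hR.const_mul βh).mul hone).neg))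
  rw [h.fderiv]; refine Prod.ext ?_ (Prod.ext ?_ ?_) <;> (simp; try ring)

/-- derivative of the vaccination switching function:
if `z` solves the controlled dynamics and `λ` solves the adjoint (co-state)
equation at `t₀` (the co-state derivative `lam'` is characterized against the
standard inner product as `−(Df + u_P Dg_P + u_V Dg_V)ᵀ λ(t₀)`), then
`d/dt ⟨λ, g_V(z)⟩ = u_P ⟨λ, [g_P, g_V](z)⟩` at `t₀`. -/
theorem siri_phiV_derivative
    (β βh γ cP cV cI : ℝ)
    (hβ : 0 < β) (hβh : 0 < βh) (hγ : 0 < γ)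
    (hcP : 0 < cP) (hcV : 0 < cV) (hcI : 0 < cI)
    (uP uV t₀ : ℝ)
    (z lam : ℝ → ℝ × ℝ × ℝ) (lam' : ℝ × ℝ × ℝ)
    (hz : HasDerivAt z
      (fVec cP cI γ (z t₀) + uP • gPVec β βh cP (z t₀) + uV • gVVec cV (z t₀)) t₀)
    (hlam : HasDerivAt lam lam' t₀)
    (hlam' : ∀ v : ℝ × ℝ × ℝ,
      dot3 lam' v =
        -(dot3 (lam t₀)
          (fderiv ℝ (fVec cP cI γ) (z t₀) v +
            uP • fderiv ℝ (gPVec β βh cP) (z t₀) v +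
            uV • fderiv ℝ (gVVec cV) (z t₀) v))) :
    HasDerivAt (fun t => dot3 (lam t) (gVVec cV (z t)))
      (uP * dot3 (lam t₀) (lieBr (gPVec β βh cP) (gVVec cV) (z t₀))) t₀ := by
  have hzS : HasDerivAt (fun t => (z t).2.1)
      (fVec cP cI γ (z t₀) + uP • gPVec β βh cP (z t₀) + uV • gVVec cV (z t₀)).2.1 t₀ :=
    hz.snd.fst
  have hl1 : HasDerivAt (fun t => (lam t).1) lam'.1 t₀ := hlam.fst
  have hl2 : HasDerivAt (fun t => (lam t).2.1) lam'.2.1 t₀ := hlam.snd.fst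
  have hl3 : HasDerivAt (fun t => (lam t).2.2) lam'.2.2 t₀ := hlam.snd.snd
  set s' := (fVec cP cI γ (z t₀) + uP • gPVec β βh cP (z t₀) + uV • gVVec cV (z t₀)).2.1 with hs'
  have hD : HasDerivAt (fun t => (lam t).1 * (cV * (z t).2.1) +
      (lam t).2.1 * (-(z t).2.1) + (lam t).2.2 * (z t).2.1)
      ((lam'.1 * (cV * (z t₀).2.1) + (lam t₀).1 * (cV * s')) +
       (lam'.2.1 * (-(z t₀).2.1) + (lam t₀).2.1 * (-s')) +
       (lam'.2.2 * (z t₀).2.1 + (lam t₀).2.2 * s')) t₀ :=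
    ((hl1.mul (hzS.const_mul cV)).add (hl2.mul hzS.neg)).add (hl3.mul hzS)
  have key := hlam' (gVVec cV (z t₀))
  have hs'c : s' = uP * (-(β * (z t₀).2.1 * (1 - (z t₀).2.1 - (z t₀).2.2))) + uV * (-(z t₀).2.1) := by
    simp [hs', fVec, gPVec, gVVec, Prod.add_def, Prod.smul_def, smul_eq_mul]
  simp only [fd_f, fd_gP, fd_gV, dot3, gVVec, Prod.smul_def, Prod.add_def, smul_eq_mul] at key ⊢
  convert hD using 1
  simp only [lieBr, fd_gP, fd_gV, dot3, gVVec, gPVec, Prod.sub_def, hs'c]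
  ring_nf
  ring_nf at key
  linarith [key]
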